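/- Let a, b be complex numbers with Re(a·conj(b)) ≥ 0, and let u, u', v, v' be positive real numbers with u ≤ u' and v ≤ v'. Then |a·u + b·v| ≤ |a·u' + b·v'|. (This is the key inequality showing that if W₁ and W₂ are hyponormal unilateral weighted shifts with positive weight sequences (w⁽¹⁾ₙ) and (w⁽²⁾ₙ), i.e., with nondecreasing weights, and Re(a·conj(b)) ≥ 0, then a·W₁ + b·W₂ is hyponormal.) -/

import Mathlib

/-- If `a, b` are complex numbers with `Re(a·conj b) ≥ 0` and `0 < u ≤ u'`, `0 < v ≤ v'`,
then `|a·u + b·v| ≤ |a·u' + b·v'|`.  This is the key inequality showing that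
`a·W₁ + b·W₂` is a hyponormal weighted shift whenever `W₁`, `W₂` are hyponormal
weighted shifts (i.e. have nondecreasing positive weights) and `Re(a·conj b) ≥ 0`. -/
theorem abs_add_mono_of_re_mul_conj_nonneg (a b : ℂ)
    (hab : 0 ≤ (a * (starRingEnd ℂ) b).re)
    (u u' v v' : ℝ) (hu : 0 < u) (hv : 0 < v) (hu' : 0 < u') (hv' : 0 < v')
    (huu' : u ≤ u') (hvv' : v ≤ v') :
    ‖a * (u : ℂ) + b * (v : ℂ)‖ ≤ ‖a * (u' : ℂ) + b * (v' : ℂ)‖ := by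
  have h : ∀ x y : ℝ, ‖a * (x : ℂ) + b * (y : ℂ)‖ ^ 2
      = (a.re ^ 2 + a.im ^ 2) * x ^ 2 + (b.re ^ 2 + b.im ^ 2) * y ^ 2
        + 2 * (a.re * b.re + a.im * b.im) * x * y := by
    intro x y
    rw [← Complex.normSq_eq_norm_sq]
    simp [Complex.normSq_apply, Complex.add_re, Complex.add_im, Complex.mul_re,
      Complex.mul_im]
    ring
  have hab' : 0 ≤ a.re * b.re + a.im * b.im := by
    simpa [Complex.mul_re, Complex.conj_re, Complex.conj_im] using hab
  have hsq : ‖a * (u : ℂ) + b * (v : ℂ)‖ ^ 2 ≤ ‖a * (u' : ℂ) + b * (v' : ℂ)‖ ^ 2 := by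
    rw [h, h]
    nlinarith [mul_le_mul huu' huu' hu.le hu'.le, mul_le_mul hvv' hvv' hv.le hv'.le,
      mul_le_mul huu' hvv' hv.le hu'.le, sq_nonneg a.re, sq_nonneg a.im,
      sq_nonneg b.re, sq_nonneg b.im]
  nlinarith [hsq, norm_nonneg (a * (u : ℂ) + b * (v : ℂ)), norm_nonneg (a * (u' : ℂ) + b * (v' : ℂ))]
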